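/- Let 1 → N → G → Γ → 1 be a short exact sequence of groups with Γ locally cyclic (every finitely generated subgroup of Γ is cyclic). Then every commutator [g,h] with g,h ∈ G is a (G,N)-commutator, i.e., of the form [g',x] with g' ∈ G and x ∈ N. Consequently cl_G and cl_{G,N} coincide on [G,N]. -/

import Mathlib

open scoped commutatorElement

/-- The mixed commutator length `cl_{G,N}` (∞ if not a product of mixed commutators). -/
noncomputable def clGN {G : Type*} [Group G] (N : Subgroup G) (x : G) : ℕ∞ :=
  sInf {n : ℕ∞ | ∃ k : ℕ, n = k ∧ ∃ g v : Fin k → G, (∀ i, v i ∈ N) ∧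
    x = (List.ofFn fun i => ⁅g i, v i⁆).prod}

/-- The rank of a subgroup: minimal size of a generating set. -/
noncomputable def rk {G : Type*} [Group G] (H : Subgroup G) : ℕ∞ :=
  sInf {n : ℕ∞ | ∃ S : Finset G, Subgroup.closure (S : Set G) = H ∧ n = S.card}

/-- The intermediate rank `intrk^Γ(Λ) = inf {rk Θ | Λ ≤ Θ ≤ Γ}`. -/
noncomputable def intrk {G : Type*} [Group G] (Λ : Subgroup G) : ℕ∞ :=
  sInf {n : ℕ∞ | ∃ Θ : Subgroup G, Λ ≤ Θ ∧ n = rk Θ}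

/-- The general rank in the sense of Malcev. -/
noncomputable def genrk (G : Type*) [Group G] : ℕ∞ :=
  sSup {n : ℕ∞ | ∃ Λ : Subgroup G, Λ.FG ∧ n = intrk Λ}

/-- The special rank in the sense of Malcev. -/
noncomputable def sperk (G : Type*) [Group G] : ℕ∞ :=
  sSup {n : ℕ∞ | ∃ Λ : Subgroup G, Λ.FG ∧ n = rk Λ}

private lemma commA {G : Type*} [Group G] (g h : G) (t : ℤ) : ⁅g * h ^ t, h⁆ = ⁅g, h⁆ := by
  simp only [commutatorElement_def]; group

private lemma commB {G : Type*} [Group G] (x g' : G) : ⁅x, g'⁆ = ⁅g'⁻¹, g' * x * g'⁻¹⁆ := by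
  simp only [commutatorElement_def]; group

private lemma keylem {G Γ : Type*} [Group G] [Group Γ] (q : G →* Γ) (c : Γ) :
    ∀ (n : ℕ) (a b : ℤ) (g h : G), b.natAbs = n → q g = c ^ a → q h = c ^ b →
      ∃ g' x : G, x ∈ q.ker ∧ ⁅g, h⁆ = ⁅g', x⁆ := by
  intro n
  induction n using Nat.strong_induction_on with
  | _ n ih =>
    intro a b g h hb hg hh
    rcases eq_or_ne b 0 with h0 | h0
    · exact ⟨g, h, by simp [MonoidHom.mem_ker, hh, h0], rfl⟩
    · set s := a / b with hs
      set r := a % b with hr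
      have hgr : q (g * h ^ (-s)) = c ^ r := by
        rw [map_mul, map_zpow, hg, hh, ← zpow_mul, ← zpow_add]
        congr 1
        rw [hr, Int.emod_def, hs]; ring
      have hlt : r.natAbs < n := by
        have h1 : 0 ≤ r := Int.emod_nonneg a h0
        have h2 : r < |b| := by
          rw [hr]
          rcases lt_trichotomy b 0 with hlt' | heq | hgt
          · rw [abs_of_neg hlt', ← Int.emod_neg]
            exact Int.emod_lt_of_pos a (by omega)
          · exact absurd heq h0
          · rw [abs_of_pos hgt]; exact Int.emod_lt_of_pos a hgt
        rw [Int.abs_eq_natAbs] at h2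
        omega
      obtain ⟨g', x, hx, hc⟩ := ih r.natAbs hlt b r h (g * h ^ (-s)) rfl hh hgr
      refine ⟨g'⁻¹, g' * x * g'⁻¹, ?_, ?_⟩
      · have : q x = 1 := hx
        simp [MonoidHom.mem_ker, this]
      · calc ⁅g, h⁆ = ⁅g * h ^ (-s), h⁆ := (commA g h (-s)).symm
          _ = ⁅h, g * h ^ (-s)⁆⁻¹ := by rw [commutatorElement_inv]
          _ = ⁅g', x⁆⁻¹ := by rw [hc]
          _ = ⁅x, g'⁆ := by rw [commutatorElement_inv]
          _ = ⁅g'⁻¹, g' * x * g'⁻¹⁆ := commB x g'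


/-- if `Γ = G/N` is locally cyclic, every commutator in `G`
is a `(G,N)`-commutator, and `cl_G = cl_{G,N}` on `[G,N]`. -/
theorem commutator_eq_mixed_of_locallyCyclic {G Γ : Type*} [Group G] [Group Γ]
    (q : G →* Γ) (hq : Function.Surjective q)
    (hlc : ∀ Λ : Subgroup Γ, Λ.FG → IsCyclic Λ) :
    (∀ g h : G, ∃ (g' : G) (x : G), x ∈ q.ker ∧ ⁅g, h⁆ = ⁅g', x⁆) ∧
    (∀ x ∈ ⁅(⊤ : Subgroup G), q.ker⁆, clGN (⊤ : Subgroup G) x = clGN q.ker x) := by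

  have part1 : ∀ g h : G, ∃ (g' : G) (x : G), x ∈ q.ker ∧ ⁅g, h⁆ = ⁅g', x⁆ := by
    intro g h
    set Λ : Subgroup Γ := Subgroup.closure ({q g, q h} : Set Γ) with hΛ
    classical
    have hfg : Λ.FG := ⟨({q g, q h} : Finset Γ), by simp [hΛ]⟩
    haveI := hlc Λ hfg
    obtain ⟨ζ, hζ⟩ := IsCyclic.exists_generator (α := Λ)
    have hgmem : q g ∈ Λ := Subgroup.subset_closure (by simp)
    have hhmem : q h ∈ Λ := Subgroup.subset_closure (by simp)
    obtain ⟨a, ha⟩ := Subgroup.mem_zpowers_iff.mp (hζ ⟨q g, hgmem⟩)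
    obtain ⟨b, hb⟩ := Subgroup.mem_zpowers_iff.mp (hζ ⟨q h, hhmem⟩)
    have ha' : q g = (ζ : Γ) ^ a := by
      have := congrArg (Subtype.val) ha; simpa using this.symm
    have hb' : q h = (ζ : Γ) ^ b := by
      have := congrArg (Subtype.val) hb; simpa using this.symm
    exact keylem q (ζ : Γ) b.natAbs a b g h rfl ha' hb'
  refine ⟨part1, ?_⟩
  intro x _
  unfold clGN
  congr 1
  ext n
  constructor
  · rintro ⟨k, hn, g, v, hv, hx⟩
    choose g' w hw hcomm using fun i => part1 (g i) (v i)
    exact ⟨k, hn, g', w, hw, by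
      rw [hx]; exact congrArg List.prod (congrArg List.ofFn (funext fun i => hcomm i))⟩
  · rintro ⟨k, hn, g, v, hv, hx⟩
    exact ⟨k, hn, g, v, fun i => trivial, hx⟩
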